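/- Let Q be an I×I real matrix, p ∈ ℝ^I, and s range over binary vectors in {0,1}^I with Σᵢ sᵢ = N (N ≥ 1 fixed). Let Z = −(Q + Qᵀ) with minimal eigenvalue λ_Z. Then for η > 0 and any such s with sᵀQs > 0: (sᵀp)/(sᵀQs) ≤ η if and only if sᵀ(Z − λ_Z I)s + (2/η)sᵀp + λ_Z·N ≤ 0, and the left-hand side of the latter inequality is a convex function of s ∈ ℝ^I (for fixed η). -/

import Mathlib

open Matrix

theorem stmt_18 {I : ℕ} (Q : Matrix (Fin I) (Fin I) ℝ) (p : Fin I → ℝ)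
    (N : ℕ) (hN : 1 ≤ N)
    (Z : Matrix (Fin I) (Fin I) ℝ) (hZdef : Z = -(Q + Qᵀ)) (hZ : Z.IsHermitian)
    (lam : ℝ) (hlam : IsLeast (Set.range hZ.eigenvalues) lam)
    (η : ℝ) (hη : 0 < η) :
    (∀ s : Fin I → ℝ, (∀ i, s i = 0 ∨ s i = 1) → ∑ i, s i = (N : ℝ) →
        0 < s ⬝ᵥ (Q *ᵥ s) →
        ((s ⬝ᵥ p) / (s ⬝ᵥ (Q *ᵥ s)) ≤ η ↔
          s ⬝ᵥ ((Z - lam • (1 : Matrix (Fin I) (Fin I) ℝ)) *ᵥ s)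
            + (2 / η) * (s ⬝ᵥ p) + lam * N ≤ 0)) ∧
      ConvexOn ℝ Set.univ
        (fun s : Fin I → ℝ =>
          s ⬝ᵥ ((Z - lam • (1 : Matrix (Fin I) (Fin I) ℝ)) *ᵥ s) + (2 / η) * (s ⬝ᵥ p)) := by
  set M : Matrix (Fin I) (Fin I) ℝ := Z - lam • (1 : Matrix (Fin I) (Fin I) ℝ) with hM
  -- M is positive semidefinite
  have hMpsd : M.PosSemidef := by
    have hU := hZ.spectral_theorem
    have hdecomp : M = (hZ.eigenvectorUnitary : Matrix (Fin I) (Fin I) ℝ) *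
        Matrix.diagonal (fun i => hZ.eigenvalues i - lam) *
        (hZ.eigenvectorUnitary : Matrix (Fin I) (Fin I) ℝ)ᴴ := by
      have h1 : (hZ.eigenvectorUnitary : Matrix (Fin I) (Fin I) ℝ) *
          (lam • (1 : Matrix (Fin I) (Fin I) ℝ)) *
          (star (hZ.eigenvectorUnitary : Matrix (Fin I) (Fin I) ℝ)) =
          lam • (1 : Matrix (Fin I) (Fin I) ℝ) := by
        rw [Matrix.mul_smul, Matrix.mul_one, Matrix.smul_mul,
          (Matrix.mem_unitaryGroup_iff.mp hZ.eigenvectorUnitary.2)]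
      have hdiag : Matrix.diagonal (fun i => hZ.eigenvalues i - lam) =
          Matrix.diagonal (RCLike.ofReal ∘ hZ.eigenvalues) -
          lam • (1 : Matrix (Fin I) (Fin I) ℝ) := by
        ext i j
        by_cases h : i = j <;>
          simp [Matrix.diagonal, Matrix.one_apply, h, RCLike.ofReal]
      rw [hM, hdiag, Matrix.mul_sub, Matrix.sub_mul]
      rw [show (hZ.eigenvectorUnitary : Matrix (Fin I) (Fin I) ℝ)ᴴ =
        star (hZ.eigenvectorUnitary : Matrix (Fin I) (Fin I) ℝ) from rfl, h1, ← Unitary.conjStarAlgAut_apply (S := ℝ), ← hU]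
    rw [hdecomp]
    exact Matrix.PosSemidef.mul_mul_conjTranspose_same
      (Matrix.PosSemidef.diagonal (fun i => sub_nonneg.mpr (hlam.2 ⟨i, rfl⟩))) _
  constructor
  · intro s hsbin hsum hpos
    -- compute s ⬝ᵥ (M *ᵥ s)
    have hss : s ⬝ᵥ s = (N : ℝ) := by
      rw [← hsum]
      simp only [dotProduct]
      refine Finset.sum_congr rfl fun i _ => ?_
      rcases hsbin i with h | h <;> simp [h]
    have hQT : s ⬝ᵥ (Qᵀ *ᵥ s) = s ⬝ᵥ (Q *ᵥ s) := by
      rw [Matrix.mulVec_transpose, dotProduct_comm, ← Matrix.dotProduct_mulVec]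
    have hZs : s ⬝ᵥ (Z *ᵥ s) = -2 * (s ⬝ᵥ (Q *ᵥ s)) := by
      rw [hZdef]
      simp only [Matrix.neg_mulVec, Matrix.add_mulVec, dotProduct_neg,
        dotProduct_add, hQT]
      ring
    have hMs : s ⬝ᵥ (M *ᵥ s) = -2 * (s ⬝ᵥ (Q *ᵥ s)) - lam * N := by
      rw [hM, Matrix.sub_mulVec, dotProduct_sub, hZs, Matrix.smul_mulVec,
        Matrix.one_mulVec, dotProduct_smul, smul_eq_mul, hss]
    rw [hMs, div_le_iff₀ hpos]
    constructor
    · intro h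
      have h2 : (2 / η) * (s ⬝ᵥ p) ≤ 2 * (s ⬝ᵥ (Q *ᵥ s)) := by
        rw [div_mul_eq_mul_div, div_le_iff₀ hη]
        nlinarith
      linarith
    · intro h
      have h2 : (2 / η) * (s ⬝ᵥ p) ≤ 2 * (s ⬝ᵥ (Q *ᵥ s)) := by linarith
      rw [div_mul_eq_mul_div, div_le_iff₀ hη] at h2
      nlinarith
  · -- convexity
    refine ⟨convex_univ, fun x _ y _ a b ha hb hab => ?_⟩
    have hq := hMpsd.dotProduct_mulVec_nonneg (x - y)
    simp only [Pi.star_apply, star_trivial] at hq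
    have hq' : 0 ≤ (x - y) ⬝ᵥ (M *ᵥ (x - y)) := hq
    have hexp : (x - y) ⬝ᵥ (M *ᵥ (x - y)) =
        x ⬝ᵥ (M *ᵥ x) - x ⬝ᵥ (M *ᵥ y) - y ⬝ᵥ (M *ᵥ x) + y ⬝ᵥ (M *ᵥ y) := by
      simp only [Matrix.mulVec_sub, sub_dotProduct, dotProduct_sub]
      ring
    simp only [smul_eq_mul, Pi.add_apply, Pi.smul_apply]
    have hcomb : (a • x + b • y) ⬝ᵥ (M *ᵥ (a • x + b • y)) =
        a * a * (x ⬝ᵥ (M *ᵥ x)) + a * b * (x ⬝ᵥ (M *ᵥ y)) +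
        b * a * (y ⬝ᵥ (M *ᵥ x)) + b * b * (y ⬝ᵥ (M *ᵥ y)) := by
      simp only [Matrix.mulVec_add, dotProduct_add, add_dotProduct,
        Matrix.mulVec_smul, dotProduct_smul, smul_dotProduct, smul_eq_mul]
      ring
    have hlin : (a • x + b • y) ⬝ᵥ p = a * (x ⬝ᵥ p) + b * (y ⬝ᵥ p) := by
      simp only [add_dotProduct, smul_dotProduct, smul_eq_mul]
    rw [hcomb, hlin]
    rw [hexp] at hq'
    have hb' : b = 1 - a := by linarith
    subst hb'
    nlinarith [mul_nonneg ha hb, mul_nonneg (mul_nonneg ha hb) hq']
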